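/- For every $n \in \mathbb{N}$, the additive topological group $\mathbb{R}^n$ is weakly 2-swelling: for all compact $A, B \subseteq \mathbb{R}^n$ and $a, b \in \mathbb{R}^n$ with $(a+A) \cap (b+B) = \emptyset$, the inclusion $(a+A) \cup (b+B) \subseteq A \cup B$ implies $(a+A) \cup (b+B) = A \cup B$ and $A \cap B = \emptyset$. -/

import Mathlib

open Filter Topology

lemma freq_pigeonhole {α : Type*} [DecidableEq α] (T : Finset α) (p : Finset α → ℕ → Prop)
    (h : ∀ᶠ N in atTop, ∃ F ∈ T.powerset, p F N) :
    ∃ F ∈ T.powerset, ∃ᶠ N in atTop, p F N := by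
  by_contra hc
  push_neg at hc
  have h2 : ∀ᶠ N in atTop, ∀ F ∈ T.powerset, ¬ p F N :=
    (eventually_all_finset _).2 fun F hF => (not_frequently.1 (by simpa using hc F hF))
  obtain ⟨N, ⟨F, hF, hp⟩, hnp⟩ := (h.and h2).exists
  exact hnp F hF hp

lemma shift_zero {n : ℕ} {C : Set (Fin n → ℝ)} (hC : IsCompact C) (hne : C.Nonempty)
    {v : Fin n → ℝ} (h : (fun x => v + x) '' C ⊆ C) : v = 0 := by
  classical
  have hcont : Continuous (fun x : Fin n → ℝ => ∑ i, v i * x i) := by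
    apply continuous_finset_sum
    intro i _
    exact continuous_const.mul (continuous_apply i)
  obtain ⟨x, hx, hmax⟩ := hC.exists_isMaxOn hne hcont.continuousOn
  have hvx : v + x ∈ C := h ⟨x, hx, rfl⟩
  have hle : ∑ i, v i * (v i + x i) ≤ ∑ i, v i * x i := hmax hvx
  have hsum : ∑ i, v i * (v i + x i) = (∑ i, v i * v i) + ∑ i, v i * x i := by
    rw [← Finset.sum_add_distrib]
    congr 1; ext i; ring
  have h0 : (∑ i, v i * v i) ≤ 0 := by rw [hsum] at hle; linarith
  have hnn : ∀ i ∈ Finset.univ, 0 ≤ v i * v i := fun i _ => mul_self_nonneg _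
  have hz : ∑ i, v i * v i = 0 := le_antisymm h0 (Finset.sum_nonneg hnn)
  funext i
  exact mul_self_eq_zero.mp ((Finset.sum_eq_zero_iff_of_nonneg hnn).1 hz i (Finset.mem_univ i))

lemma dioph {μ : ℝ} (hμ : 1 < μ) {ε : ℝ} (hε : 0 < ε) :
    ∃ k j : ℤ, 1 ≤ k ∧ |(k : ℝ) + j * μ| < ε := by
  classical
  set H : AddSubgroup ℝ :=
    { carrier := {x | ∃ k j : ℤ, x = (k : ℝ) + j * μ}
      zero_mem' := ⟨0, 0, by norm_num⟩
      add_mem' := by rintro x y ⟨k, j, rfl⟩ ⟨k', j', rfl⟩; exact ⟨k + k', j + j', by push_cast; ring⟩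
      neg_mem' := by rintro x ⟨k, j, rfl⟩; exact ⟨-k, -j, by push_cast; ring⟩ } with hHdef
  rcases H.dense_or_cyclic with hd | ⟨g, hg⟩
  · obtain ⟨h, hH, h0, hlt⟩ : ∃ h ∈ (H : Set ℝ), 0 < h ∧ h < min ε 1 := by
      obtain ⟨h, hH, h1, h2⟩ := hd.exists_between (lt_min hε one_pos)
      exact ⟨h, hH, h1, h2⟩
    have hε' : h < ε := lt_of_lt_of_le hlt (min_le_left _ _)
    have h1' : h < 1 := lt_of_lt_of_le hlt (min_le_right _ _)
    obtain ⟨k, j, hkj⟩ := hH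
    rcases le_or_gt 1 k with hk | hk
    · refine ⟨k, j, hk, ?_⟩
      rw [← hkj, abs_of_pos h0]; exact hε'
    · have hk0 : k ≤ 0 := by omega
      set m : ℤ := ⌊1 / h⌋ with hm
      have h1le : (1:ℝ) ≤ 1 / h := by rw [le_div_iff₀ h0]; linarith
      have hm1 : 1 ≤ m := by
        rw [hm, Int.le_floor]; exact_mod_cast h1le
      have hfl : (m:ℝ) ≤ 1 / h := Int.floor_le _
      have hfl2 : 1 / h < m + 1 := Int.lt_floor_add_one _
      have hmh1 : (m:ℝ) * h ≤ 1 := by rw [le_div_iff₀ h0] at hfl; linarith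
      have hmh2 : 1 - (m:ℝ) * h < h := by rw [div_lt_iff₀ h0] at hfl2; nlinarith
      refine ⟨1 - m * k, -(m * j), ?_, ?_⟩
      · have : m * k ≤ 0 := mul_nonpos_of_nonneg_of_nonpos (by omega) hk0
        omega
      · have hval : ((1 - m * k : ℤ) : ℝ) + ((-(m * j) : ℤ)) * μ = 1 - m * h := by
          rw [hkj]; push_cast; ring
        rw [hval, abs_of_nonneg (by linarith)]
        linarith
  · have h1 : (1:ℝ) ∈ H := ⟨1, 0, by norm_num⟩
    have hμH : μ ∈ H := ⟨0, 1, by norm_num⟩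
    rw [hg] at h1 hμH
    obtain ⟨m, hm⟩ := AddSubgroup.mem_closure_singleton.1 h1
    obtain ⟨m', hm'⟩ := AddSubgroup.mem_closure_singleton.1 hμH
    rw [zsmul_eq_mul] at hm hm'
    have hm0 : m ≠ 0 := by
      rintro rfl; simp at hm
    have key : (m':ℝ) = μ * m := by
      calc (m':ℝ) = m' * ((m:ℝ) * g) := by rw [hm, mul_one]
        _ = ((m':ℝ) * g) * m := by ring
        _ = μ * m := by rw [hm']
    rcases lt_or_gt_of_ne hm0 with hneg | hpos
    · refine ⟨-m', m, ?_, ?_⟩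
      · have hmr : (1:ℝ) ≤ (-m : ℤ) := by exact_mod_cast (by omega : (1:ℤ) ≤ -m)
        push_cast at hmr
        have : (1:ℝ) < (-m':ℝ) := by nlinarith
        exact_mod_cast this.le
      · have : ((-m' : ℤ):ℝ) + (m:ℤ) * μ = 0 := by push_cast; nlinarith [key]
        rw [this]; simpa using hε
    · refine ⟨m', -m, ?_, ?_⟩
      · have hmr : (1:ℝ) ≤ (m : ℤ) := by exact_mod_cast (by omega : (1:ℤ) ≤ m)
        push_cast at hmr
        have : (1:ℝ) < (m':ℝ) := by nlinarith
        exact_mod_cast this.le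
      · have : ((m' : ℤ):ℝ) + ((-m:ℤ)) * μ = 0 := by push_cast; nlinarith [key]
        rw [this]; simpa using hε

lemma stmt15_main (n : ℕ) (A B : Set (Fin n → ℝ)) (hA : IsCompact A) (hB : IsCompact B)
    (a : Fin n → ℝ) (μ : ℝ) (hμ : 1 < μ) (ha : a ≠ 0) (b : Fin n → ℝ) (hb : b = (1 - μ) • a)
    (hdisj : (fun x => a + x) '' A ∩ (fun x => b + x) '' B = ∅)
    (h1 : (fun x => a + x) '' A ∪ (fun x => b + x) '' B ⊆ A ∪ B) :
    (fun x => a + x) '' A ∪ (fun x => b + x) '' B = A ∪ B ∧ A ∩ B = ∅ := by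
  classical
  set c : Fin n → ℝ := μ • a with hc
  have hc0 : c ≠ 0 := smul_ne_zero (by linarith) ha
  have hcnorm : 0 < ‖c‖ := norm_pos_iff.mpr hc0
  set S : Set (Fin n → ℝ) := A ∪ B with hS
  set S' : Set (Fin n → ℝ) := (fun x => a + x) '' A ∪ (fun x => b + x) '' B with hS'
  have hScomp : IsCompact S := hA.union hB
  have hSclosed : IsClosed S := hScomp.isClosed
  obtain ⟨R, hR⟩ := isBounded_iff_forall_norm_le.mp hScomp.isBounded
  set KS : (Fin n → ℝ) → Set ℤ := fun x => {k : ℤ | x + (k : ℝ) • c ∈ S} with hKS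
  set u : (Fin n → ℝ) → ℕ := fun x => (KS x).ncard with hu
  -- bound on indices
  have hbound : ∀ (x : Fin n → ℝ) (k : ℤ), k ∈ KS x → |k| ≤ ⌈(R + ‖x‖) / ‖c‖⌉ := by
    intro x k hk
    have h1' : ‖x + (k:ℝ) • c‖ ≤ R := hR _ hk
    have h2 : ‖(k:ℝ) • c‖ ≤ R + ‖x‖ := by
      have : (k:ℝ) • c = (x + (k:ℝ) • c) - x := by abel
      rw [this]
      calc ‖(x + (k:ℝ) • c) - x‖ ≤ ‖x + (k:ℝ) • c‖ + ‖x‖ := norm_sub_le _ _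
        _ ≤ R + ‖x‖ := by linarith
    have h3 : |(k:ℝ)| * ‖c‖ ≤ R + ‖x‖ := by rwa [norm_smul, Real.norm_eq_abs] at h2
    have h4 : |(k:ℝ)| ≤ (R + ‖x‖) / ‖c‖ := (le_div_iff₀ hcnorm).2 h3
    have h5 : (|k| : ℝ) ≤ ((⌈(R + ‖x‖) / ‖c‖⌉ : ℤ) : ℝ) := by
      exact h4.trans (Int.le_ceil _)
    exact_mod_cast h5
  have hfin : ∀ x, (KS x).Finite := by
    intro x
    apply (Set.finite_Icc (-(⌈(R + ‖x‖) / ‖c‖⌉)) ⌈(R + ‖x‖) / ‖c‖⌉).subset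
    intro k hk
    have := abs_le.mp (hbound x k hk)
    rw [Set.mem_Icc]
    omega
  -- coset membership rewriting
  have hmemc : ∀ (x : Fin n → ℝ) (j k : ℤ), (x + (j:ℝ) • c) + (k:ℝ) • c = x + ((k + j : ℤ):ℝ) • c := by
    intro x j k
    module
  have huPer : ∀ (x : Fin n → ℝ) (j : ℤ), u (x + (j:ℝ) • c) = u x := by
    intro x j
    have hshift : KS (x + (j:ℝ) • c) = (fun k => k - j) '' KS x := by
      ext k
      simp only [hKS, Set.mem_image, Set.mem_setOf_eq]
      constructor
      · intro hk
        refine ⟨k + j, ?_, by ring⟩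
        rwa [hmemc] at hk
      · rintro ⟨k', hk', rfl⟩
        rw [hmemc]
        simpa using hk'
    simp only [hu, hshift]
    exact Set.ncard_image_of_injective _ (fun p q h => by omega)
  -- the key monotonicity inequality
  have hmono : ∀ x : Fin n → ℝ,
      u x + ({k : ℤ | x + (k:ℝ) • c ∈ A ∩ B}).ncard
          + ({k : ℤ | (x + a) + (k:ℝ) • c ∈ S \ S'}).ncard
        ≤ u (x + a) := by
    intro x
    set P : Set ℤ := {k | x + (k:ℝ) • c ∈ A} with hP
    set Q : Set ℤ := {k | x + (k:ℝ) • c ∈ B} with hQ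
    set PA : Set ℤ := {k | (x + a) + (k:ℝ) • c ∈ (fun y => a + y) '' A} with hPA
    set QB : Set ℤ := {k | (x + a) + (k:ℝ) • c ∈ (fun y => b + y) '' B} with hQB
    set D : Set ℤ := {k | (x + a) + (k:ℝ) • c ∈ S \ S'} with hD
    have habk : ∀ k : ℤ, (x + a) + (k:ℝ) • c = a + (x + (k:ℝ) • c) := by intro k; abel
    have hbbk : ∀ k : ℤ, (x + a) + (k:ℝ) • c = b + (x + ((k+1:ℤ):ℝ) • c) := by
      intro k
      rw [hb, hc]
      push_cast
      module
    have hPAeq : PA = P := by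
      ext k
      simp only [hPA, hP, Set.mem_setOf_eq, Set.mem_image]
      constructor
      · rintro ⟨z, hz, hzeq⟩
        have : z = x + (k:ℝ) • c := by
          have := hzeq.trans (habk k)
          exact add_left_cancel this
        rwa [← this]
      · intro hk
        exact ⟨x + (k:ℝ) • c, hk, (habk k).symm⟩
    have hQBeq : QB = (fun k => k - 1) '' Q := by
      ext k
      simp only [hQB, hQ, Set.mem_setOf_eq, Set.mem_image]
      constructor
      · rintro ⟨z, hz, hzeq⟩
        refine ⟨k + 1, ?_, by ring⟩
        have : z = x + ((k+1:ℤ):ℝ) • c := by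
          have := hzeq.trans (hbbk k)
          exact add_left_cancel this
        rw [← this]
        exact hz
      · rintro ⟨k', hk', rfl⟩
        refine ⟨x + ((k':ℤ):ℝ) • c, hk', ?_⟩
        rw [hbbk (k' - 1)]
        norm_num
    have hPQ : KS x = P ∪ Q := rfl
    have hsub : PA ∪ QB ∪ D ⊆ KS (x + a) := by
      intro k hk
      rcases hk with (hk | hk) | hk
      · exact h1 (Or.inl hk)
      · exact h1 (Or.inr hk)
      · exact hk.1
    have hd1 : Disjoint PA QB := by
      rw [Set.disjoint_left]
      intro k hkP hkQ
      have : (x + a) + (k:ℝ) • c ∈ (fun y => a + y) '' A ∩ (fun y => b + y) '' B := ⟨hkP, hkQ⟩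
      rw [hdisj] at this
      exact this
    have hd2 : Disjoint (PA ∪ QB) D := by
      rw [Set.disjoint_left]
      rintro k (hk | hk) hkD
      · exact hkD.2 (Or.inl hk)
      · exact hkD.2 (Or.inr hk)
    have hfinKS := hfin (x + a)
    have hfinPA : PA.Finite := hfinKS.subset (fun k hk => hsub (Or.inl (Or.inl hk)))
    have hfinQB : QB.Finite := hfinKS.subset (fun k hk => hsub (Or.inl (Or.inr hk)))
    have hfinD : D.Finite := hfinKS.subset (fun k hk => hsub (Or.inr hk))
    have hfinP : P.Finite := (hfin x).subset (fun k hk => Or.inl hk)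
    have hfinQ : Q.Finite := (hfin x).subset (fun k hk => Or.inr hk)
    have hcount : (PA ∪ QB ∪ D).ncard = PA.ncard + QB.ncard + D.ncard := by
      rw [Set.ncard_union_eq hd2 (hfinPA.union hfinQB) hfinD,
          Set.ncard_union_eq hd1 hfinPA hfinQB]
    have hucount : PA.ncard + QB.ncard + D.ncard ≤ u (x + a) := by
      rw [← hcount]
      exact Set.ncard_le_ncard hsub hfinKS
    have hPAcard : PA.ncard = P.ncard := by rw [hPAeq]
    have hQBcard : QB.ncard = Q.ncard := by
      rw [hQBeq]
      exact Set.ncard_image_of_injective _ (fun p q h => by omega)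
    have hPQcard : P.ncard + Q.ncard = (P ∪ Q).ncard + (P ∩ Q).ncard := by
      rw [Set.ncard_union_add_ncard_inter P Q hfinP hfinQ]
    have hiq : {k : ℤ | x + (k:ℝ) • c ∈ A ∩ B} = P ∩ Q := by
      ext k
      simp only [hP, hQ, Set.mem_setOf_eq, Set.mem_inter_iff]
    rw [hiq]
    have huq : u x = (P ∪ Q).ncard := by simp only [hu]; rw [hPQ]
    omega
  have hmono1 : ∀ x : Fin n → ℝ, u x ≤ u (x + a) := by
    intro x
    have := hmono x
    omega
  -- iterated monotonicity
  have hchainN : ∀ (N : ℕ) (x : Fin n → ℝ), u x ≤ u (x + (N:ℝ) • a) := by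
    intro N
    induction N with
    | zero => intro x; simp
    | succ N ih =>
        intro x
        have h2 := hmono1 (x + (N:ℝ) • a)
        have h3 : x + (N:ℝ) • a + a = x + ((N+1:ℕ):ℝ) • a := by push_cast; module
        rw [h3] at h2
        exact (ih x).trans h2
  -- upper semicontinuity
  have husc : ∀ (x₀ : Fin n → ℝ) (v : ℕ → Fin n → ℝ) (m : ℕ),
      Tendsto v atTop (𝓝 x₀) → (∀ N, m ≤ u (v N)) → m ≤ u x₀ := by
    intro x₀ v m hv hm
    set T : Finset ℤ := Finset.Icc (-(⌈(R + (‖x₀‖ + 1)) / ‖c‖⌉)) ⌈(R + (‖x₀‖ + 1)) / ‖c‖⌉ with hT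
    have hnorm : ∀ᶠ N in atTop, ‖v N‖ ≤ ‖x₀‖ + 1 :=
      (hv.norm).eventually (eventually_le_nhds (by linarith))
    have hexF : ∀ᶠ N in atTop, ∃ F ∈ T.powerset, F.card = m ∧ (↑F : Set ℤ) ⊆ KS (v N) := by
      filter_upwards [hnorm] with N hN
      obtain ⟨t, hts, htm⟩ := Set.exists_subset_card_eq (show m ≤ (KS (v N)).ncard from hm N)
      have htfin : t.Finite := (hfin (v N)).subset hts
      refine ⟨htfin.toFinset, ?_, ?_, ?_⟩
      · rw [Finset.mem_powerset]
        intro k hk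
        rw [Set.Finite.mem_toFinset] at hk
        have hb1 := abs_le.mp (hbound (v N) k (hts hk))
        have hb2 : ⌈(R + ‖v N‖) / ‖c‖⌉ ≤ ⌈(R + (‖x₀‖ + 1)) / ‖c‖⌉ := by
          apply Int.ceil_le_ceil
          gcongr
        rw [hT, Finset.mem_Icc]
        omega
      · rw [← htm, Set.ncard_eq_toFinset_card _ htfin]
      · intro k hk
        rw [Finset.mem_coe, Set.Finite.mem_toFinset] at hk
        exact hts hk
    obtain ⟨F, hFT, hFfreq⟩ := freq_pigeonhole T _ hexF
    obtain ⟨N₀, hN₀⟩ := hFfreq.exists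
    have hmF : F.card = m := hN₀.1
    have hsubF : (↑F : Set ℤ) ⊆ KS x₀ := by
      intro k hk
      have hfreq : ∃ᶠ N in atTop, v N + (k:ℝ) • c ∈ S := hFfreq.mono (fun N hN => hN.2 hk)
      have htend : Tendsto (fun N => v N + (k:ℝ) • c) atTop (𝓝 (x₀ + (k:ℝ) • c)) :=
        hv.add_const _
      have := mem_closure_of_frequently_of_tendsto hfreq htend
      rwa [hSclosed.closure_eq] at this
    calc m = F.card := hmF.symm
      _ = (↑F : Set ℤ).ncard := (Set.ncard_coe_finset F).symm
      _ ≤ (KS x₀).ncard := Set.ncard_le_ncard hsubF (hfin x₀)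
  -- the reverse inequality
  have hle : ∀ x₀ : Fin n → ℝ, u (x₀ + a) ≤ u x₀ := by
    intro x₀
    have hex : ∀ N : ℕ, ∃ kj : ℤ × ℤ, 1 ≤ kj.1 ∧ |(kj.1:ℝ) + kj.2 * μ| < 1/(N+1) := by
      intro N
      obtain ⟨k, j, hk, hlt⟩ := dioph hμ (show (0:ℝ) < 1/(N+1) by positivity)
      exact ⟨(k, j), hk, hlt⟩
    choose kj hk hlt using hex
    set t : ℕ → ℝ := fun N => ((kj N).1 : ℝ) + (kj N).2 * μ with ht
    have ht0 : Tendsto t atTop (𝓝 0) := by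
      apply squeeze_zero_norm (fun N => ?_) tendsto_one_div_add_atTop_nhds_zero_nat
      rw [Real.norm_eq_abs]
      exact (hlt N).le
    have hv : Tendsto (fun N => x₀ + t N • a) atTop (𝓝 x₀) := by
      have h2 : Tendsto (fun N => x₀ + t N • a) atTop (𝓝 (x₀ + (0:ℝ) • a)) :=
        tendsto_const_nhds.add (ht0.smul_const a)
      simpa using h2
    apply husc x₀ _ _ hv
    intro N
    have hk1 := hk N
    have hrw : x₀ + t N • a = (x₀ + a + ((((kj N).1 - 1).toNat : ℕ):ℝ) • a) + ((kj N).2 : ℝ) • c := by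
      have hcast : ((((kj N).1 - 1).toNat : ℕ):ℝ) = ((kj N).1 : ℝ) - 1 := by
        have h5 : (((kj N).1 - 1).toNat : ℤ) = (kj N).1 - 1 := Int.toNat_of_nonneg (by omega)
        calc ((((kj N).1 - 1).toNat : ℕ):ℝ) = ((((kj N).1 - 1).toNat : ℤ) : ℝ) := by push_cast; ring
          _ = (((kj N).1 - 1 : ℤ) : ℝ) := by rw [h5]
          _ = ((kj N).1 : ℝ) - 1 := by push_cast; ring
      rw [ht, hcast, hc]
      module
    rw [hrw, huPer]
    exact hchainN _ (x₀ + a)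
  -- conclude
  have hEq : ∀ x, u (x + a) = u x := fun x => le_antisymm (hle x) (hmono1 x)
  have hzero : ∀ x : Fin n → ℝ,
      ({k : ℤ | x + (k:ℝ) • c ∈ A ∩ B}).ncard = 0 ∧
      ({k : ℤ | (x + a) + (k:ℝ) • c ∈ S \ S'}).ncard = 0 := by
    intro x
    have := hmono x
    rw [hEq x] at this
    omega
  have hAB : A ∩ B = ∅ := by
    rw [Set.eq_empty_iff_forall_notMem]
    intro z hz
    have hfin' : ({k : ℤ | z + (k:ℝ) • c ∈ A ∩ B}).Finite :=
      (hfin z).subset (fun k hk => Or.inl hk.1)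
    have h0 : (0:ℤ) ∈ {k : ℤ | z + (k:ℝ) • c ∈ A ∩ B} := by
      simp only [Set.mem_setOf_eq, Int.cast_zero, zero_smul, add_zero]
      exact hz
    have := (hzero z).1
    rw [Set.ncard_eq_zero hfin'] at this
    rw [this] at h0
    exact h0
  have hcover : S ⊆ S' := by
    intro y hy
    by_contra hyn
    have hfin' : ({k : ℤ | ((y - a) + a) + (k:ℝ) • c ∈ S \ S'}).Finite := by
      apply (hfin ((y - a) + a)).subset
      intro k hk
      exact hk.1
    have h0 : (0:ℤ) ∈ {k : ℤ | ((y - a) + a) + (k:ℝ) • c ∈ S \ S'} := by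
      simp only [Set.mem_setOf_eq, Int.cast_zero, zero_smul, add_zero, sub_add_cancel]
      exact ⟨hy, hyn⟩
    have := (hzero (y - a)).2
    rw [Set.ncard_eq_zero hfin'] at this
    rw [this] at h0
    exact h0
  exact ⟨Set.Subset.antisymm h1 hcover, hAB⟩

theorem stmt_15 (n : ℕ) (A B : Set (Fin n → ℝ)) (hA : IsCompact A) (hB : IsCompact B)
    (a b : Fin n → ℝ)
    (hdisj : (fun x => a + x) '' A ∩ (fun x => b + x) '' B = ∅)
    (h1 : (fun x => a + x) '' A ∪ (fun x => b + x) '' B ⊆ A ∪ B) :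
    (fun x => a + x) '' A ∪ (fun x => b + x) '' B = A ∪ B ∧ A ∩ B = ∅ := by
  classical
  have himg0 : ∀ C : Set (Fin n → ℝ), (fun x => (0 : Fin n → ℝ) + x) '' C = C := by
    intro C
    ext y
    simp
  rcases Set.eq_empty_or_nonempty A with hAe | hAne
  · subst hAe
    rcases Set.eq_empty_or_nonempty B with hBe | hBne
    · subst hBe
      simp
    · have hB'B : (fun x => b + x) '' B ⊆ B := by
        intro y hy
        rcases h1 (Or.inr hy) with h | h
        · simp at h
        · exact h
      have hb0 : b = 0 := shift_zero hB hBne hB'B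
      subst hb0
      rw [himg0]
      simp
  rcases Set.eq_empty_or_nonempty B with hBe | hBne
  · subst hBe
    have hA'A : (fun x => a + x) '' A ⊆ A := by
      intro y hy
      rcases h1 (Or.inl hy) with h | h
      · exact h
      · simp at h
    have ha0 : a = 0 := shift_zero hA hAne hA'A
    subst ha0
    rw [himg0]
    simp
  -- both nonempty
  have hSne : (A ∪ B).Nonempty := hAne.mono Set.subset_union_left
  have hScomp : IsCompact (A ∪ B) := hA.union hB
  have hseg : (0 : Fin n → ℝ) ∈ segment ℝ a b := by
    by_contra h0
    have hclosed : IsClosed (segment ℝ a b) := by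
      rw [segment_eq_image]
      refine (isCompact_Icc.image ?_).isClosed
      exact ((continuous_const.sub continuous_id).smul continuous_const).add
        (continuous_id.smul continuous_const)
    obtain ⟨f, u0, hfu, hall⟩ := geometric_hahn_banach_point_closed (convex_segment a b) hclosed h0
    have h00 : f 0 = 0 := map_zero f
    have hfa : 0 < f a := by
      have := hall a (left_mem_segment ℝ a b)
      linarith
    have hfb : 0 < f b := by
      have := hall b (right_mem_segment ℝ a b)
      linarith
    obtain ⟨x, hx, hmax⟩ := hScomp.exists_isMaxOn hSne f.continuous.continuousOn
    rcases hx with hxA | hxB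
    · have hmem : a + x ∈ A ∪ B := h1 (Or.inl ⟨x, hxA, rfl⟩)
      have hle : f (a + x) ≤ f x := hmax hmem
      rw [map_add] at hle
      linarith
    · have hmem : b + x ∈ A ∪ B := h1 (Or.inr ⟨x, hxB, rfl⟩)
      have hle : f (b + x) ≤ f x := hmax hmem
      rw [map_add] at hle
      linarith
  obtain ⟨t, s, ht0, hs0, hts, htab⟩ := hseg
  by_cases ha0 : a = 0
  · subst ha0
    rw [himg0] at hdisj h1 ⊢
    have hB'B : (fun x => b + x) '' B ⊆ B := by
      intro y hy
      rcases h1 (Or.inr hy) with h | h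
      · exact absurd hdisj (by rw [Set.eq_empty_iff_forall_notMem]; push_neg; exact ⟨y, h, hy⟩)
      · exact h
    have hb0 : b = 0 := shift_zero hB hBne hB'B
    subst hb0
    rw [himg0] at hdisj ⊢
    exact ⟨rfl, hdisj⟩
  by_cases hb0 : b = 0
  · subst hb0
    rw [himg0] at hdisj h1 ⊢
    have hA'A : (fun x => a + x) '' A ⊆ A := by
      intro y hy
      rcases h1 (Or.inl hy) with h | h
      · exact h
      · exact absurd hdisj (by rw [Set.eq_empty_iff_forall_notMem]; push_neg; exact ⟨y, hy, h⟩)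
    have ha0' : a = 0 := shift_zero hA hAne hA'A
    exact absurd ha0' ha0
  -- main case
  have ht0' : t ≠ 0 := by
    rintro rfl
    apply hb0
    have hs1 : s = 1 := by linarith
    rw [hs1] at htab
    simpa using htab
  have hs0' : s ≠ 0 := by
    rintro rfl
    apply ha0
    have ht1 : t = 1 := by linarith
    rw [ht1] at htab
    simpa using htab
  have htpos : 0 < t := lt_of_le_of_ne ht0 (Ne.symm ht0')
  have hspos : 0 < s := lt_of_le_of_ne hs0 (Ne.symm hs0')
  set μ : ℝ := 1 + t / s with hμdef
  have hμ : 1 < μ := by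
    rw [hμdef]
    have := div_pos htpos hspos
    linarith
  have hbeq : b = (1 - μ) • a := by
    have h2 : s⁻¹ • (t • a + s • b) = s⁻¹ • (0 : Fin n → ℝ) := by rw [htab]
    rw [smul_add, smul_smul, smul_smul, inv_mul_cancel₀ hs0', one_smul, smul_zero] at h2
    have h3 : b = -((s⁻¹ * t) • a) := by
      have := add_eq_zero_iff_eq_neg.mp h2
      linear_combination (norm := module) this
    rw [h3, ← neg_smul, hμdef]
    congr 1
    field_simp
    ring
  exact stmt15_main n A B hA hB a μ hμ ha0 b hbeq hdisj h1
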